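/- Let p ∈ (1,∞) and, for natural numbers q ≤ r, set y_{q,r} = Σ_{n=q}^{r} (1/n) x_n, where x_n = 2^{-(n-1)} Σ_{j=2^{n-1}}^{2^n − 1} b_j is the normalized indicator of M_n = [2^{n-1}, 2^n) ∩ ℕ. Then ‖y_{q,r}‖_{B_p} = (Σ_{n=q}^{r} n^{-p})^{1/p}. -/

import Mathlib

/-- A non-empty finite subset `M` of `ℕ = {1,2,...}` is admissible if `|M| ≤ min M`,
i.e. `M` is non-empty and its cardinality is at most every element of `M`. -/
def Admissible (M : Finset ℕ) : Prop := M.Nonempty ∧ ∀ k ∈ M, M.card ≤ k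

/-- `μ(x, N) = ∑_{n ∈ N} |x_n|`. -/
def mu (x : ℕ → ℝ) (N : Finset ℕ) : ℝ := ∑ n ∈ N, |x n|

/-- `N₁ < N₂ < ⋯ < N_k`: every element of `N i` is smaller than every element of `N j`
whenever `i < j`. -/
def SepChain {k : ℕ} (N : Fin k → Finset ℕ) : Prop :=
  ∀ i j : Fin k, i < j → ∀ a ∈ N i, ∀ b ∈ N j, a < b

/-- The Baernstein norm
`‖x‖_{B_p} = sup { ν_p(x; N₁,…,N_k) : k ≥ 1, N₁ < ⋯ < N_k admissible }`, where
`ν_p(x; N₁,…,N_k) = (∑_j μ(x,N_j)^p)^{1/p}`. -/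
noncomputable def BpNorm (p : ℝ) (x : ℕ → ℝ) : ℝ :=
  sSup { t : ℝ | ∃ (k : ℕ) (N : Fin k → Finset ℕ), 0 < k ∧ (∀ j, Admissible (N j)) ∧
    SepChain N ∧ t = (∑ j, (mu x (N j)) ^ p) ^ (1 / p) }

/-- The block `M_n = [2^{n-1}, 2^n) ∩ ℕ`. -/
def Mblock (n : ℕ) : Finset ℕ := Finset.Ico (2 ^ (n - 1)) (2 ^ n)

/-- `uep(N) = { 2^k − 1 : k ≥ 1, N ∩ M_k ≠ ∅ }`, the set of upper end points of the
blocks `M_k` that `N` intersects. -/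
def uep (N : Finset ℕ) : Finset ℕ :=
  ((Finset.range (N.sup id + 2)).filter fun k => 1 ≤ k ∧ (N ∩ Mblock k).Nonempty).image
    fun k => 2 ^ k - 1

/-- The diagonal operator `Δ(y) = ∑_{n=1}^K y_{2^n−1} · x_n`. -/
def DeltaOp (K : ℕ) (x : ℕ → ℕ → ℝ) (y : ℕ → ℝ) : ℕ → ℝ :=
  fun j => ∑ n ∈ Finset.Icc 1 K, y (2 ^ n - 1) * x n j

/-! ### Auxiliary lemmas -/

lemma mem_Mblock {j n : ℕ} : j ∈ Mblock n ↔ 2 ^ (n - 1) ≤ j ∧ j < 2 ^ n := Finset.mem_Ico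

lemma Mblock_disjoint {m n : ℕ} (h : m ≠ n) : Disjoint (Mblock m) (Mblock n) := by
  wlog hlt : m < n generalizing m n
  · exact (this h.symm (by omega)).symm
  refine Finset.disjoint_left.2 fun x hx hx' => ?_
  rw [mem_Mblock] at hx hx'
  have h1 : (2:ℕ) ^ m ≤ 2 ^ (n - 1) := Nat.pow_le_pow_right (by norm_num) (by omega)
  omega

lemma card_Mblock {n : ℕ} (hn : 1 ≤ n) : (Mblock n).card = 2 ^ (n - 1) := by
  rw [Mblock, Nat.card_Ico]
  have h : n - 1 + 1 = n := by omega
  have : 2 ^ n = 2 ^ (n-1) * 2 := by rw [← pow_succ, h]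
  omega

/-- Jensen: if weights are nonneg with sum ≤ 1 and values nonneg, then
`(∑ t a)^p ≤ ∑ t * a^p` for `p ≥ 1`. -/
lemma jensen_rpow {ι : Type*} (s : Finset ι) (t a : ι → ℝ) {p : ℝ}
    (hp : 1 ≤ p) (ht : ∀ i ∈ s, 0 ≤ t i) (ha : ∀ i ∈ s, 0 ≤ a i)
    (hts : ∑ i ∈ s, t i ≤ 1) :
    (∑ i ∈ s, t i * a i) ^ p ≤ ∑ i ∈ s, t i * a i ^ p := by
  set S := ∑ i ∈ s, t i with hS
  have hS0 : 0 ≤ S := Finset.sum_nonneg ht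
  rcases eq_or_lt_of_le hS0 with h0 | h0
  · have hz : ∀ i ∈ s, t i = 0 := by
      intro i hi
      have := (Finset.sum_eq_zero_iff_of_nonneg ht).1 h0.symm
      exact this i hi
    have h1 : (∑ i ∈ s, t i * a i) = 0 := Finset.sum_eq_zero fun i hi => by rw [hz i hi, zero_mul]
    have h2 : (∑ i ∈ s, t i * a i ^ p) = 0 := Finset.sum_eq_zero fun i hi => by
      rw [hz i hi, zero_mul]
    rw [h1, h2, Real.zero_rpow (by positivity)]
  · have key := Real.rpow_arith_mean_le_arith_mean_rpow s (fun i => t i / S) a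
      (fun i hi => div_nonneg (ht i hi) hS0)
      (by rw [← Finset.sum_div, div_self h0.ne']) ha hp
    have e1 : (∑ i ∈ s, t i / S * a i) = (∑ i ∈ s, t i * a i) / S := by
      rw [Finset.sum_div]; exact Finset.sum_congr rfl fun i _ => by ring
    have e2 : (∑ i ∈ s, t i / S * a i ^ p) = (∑ i ∈ s, t i * a i ^ p) / S := by
      rw [Finset.sum_div]; exact Finset.sum_congr rfl fun i _ => by ring
    rw [e1, e2, Real.div_rpow (Finset.sum_nonneg fun i hi => mul_nonneg (ht i hi) (ha i hi)) hS0,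
      div_le_div_iff₀ (by positivity) h0] at key
    have hSp : S ^ p ≤ S := by
      calc S ^ p ≤ S ^ (1:ℝ) :=
        Real.rpow_le_rpow_of_exponent_ge h0 hts hp
      _ = S := Real.rpow_one S
    calc (∑ i ∈ s, t i * a i) ^ p ≤ (∑ i ∈ s, t i * a i ^ p) / S * (S^p) := by
          rw [div_mul_eq_mul_div, le_div_iff₀ h0]; linarith [key]
      _ ≤ (∑ i ∈ s, t i * a i ^ p) / S * S := by
          apply mul_le_mul_of_nonneg_left hSp
          exact div_nonneg (Finset.sum_nonneg fun i hi => mul_nonneg (ht i hi)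
            (Real.rpow_nonneg (ha i hi) p)) hS0
      _ = ∑ i ∈ s, t i * a i ^ p := by field_simp

/-- `μ(y_{q,r}, N)` as a weighted sum of block intersection cardinalities. -/
lemma mu_formula (q r : ℕ) (N : Finset ℕ) :
    mu (fun j => ∑ n ∈ Finset.Icc q r,
        (1 / (n : ℝ)) * (if j ∈ Mblock n then (1 / 2 ^ (n - 1) : ℝ) else 0)) N
      = ∑ n ∈ Finset.Icc q r,
          (((N ∩ Mblock n).card : ℝ) * ((2:ℝ) ^ (n - 1))⁻¹) * (1 / (n : ℝ)) := by
  unfold mu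
  have habs : ∀ j : ℕ, |∑ n ∈ Finset.Icc q r,
      (1 / (n : ℝ)) * (if j ∈ Mblock n then (1 / 2 ^ (n - 1) : ℝ) else 0)|
      = ∑ n ∈ Finset.Icc q r,
      (1 / (n : ℝ)) * (if j ∈ Mblock n then (1 / 2 ^ (n - 1) : ℝ) else 0) := by
    intro j
    apply abs_of_nonneg
    apply Finset.sum_nonneg
    intro n _
    have : (0:ℝ) ≤ (if j ∈ Mblock n then (1 / 2 ^ (n - 1) : ℝ) else 0) := by positivity
    positivity
  simp_rw [habs]
  rw [Finset.sum_comm]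
  refine Finset.sum_congr rfl fun n _ => ?_
  rw [← Finset.mul_sum, Finset.sum_ite_mem]
  simp [Finset.sum_const]
  ring

/-- The sum of block intersection cardinalities is at most the cardinality of `N`. -/
lemma sum_card_inter_le (q r : ℕ) (N : Finset ℕ) :
    ∑ n ∈ Finset.Icc q r, (N ∩ Mblock n).card ≤ N.card := by
  classical
  have hdisj : ∀ n ∈ Finset.Icc q r, ∀ n' ∈ Finset.Icc q r, n ≠ n' →
      Disjoint (N ∩ Mblock n) (N ∩ Mblock n') := fun n _ n' _ h =>
    ((Mblock_disjoint h).mono (Finset.inter_subset_right) (Finset.inter_subset_right))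
  rw [← Finset.card_biUnion hdisj]
  exact Finset.card_le_card (Finset.biUnion_subset.2 fun n _ => Finset.inter_subset_left)

/-- Row sum bound: for an admissible set `N`, the normalized intersection weights sum to ≤ 1. -/
lemma row_sum (q r : ℕ) {N : Finset ℕ} (hN : Admissible N) :
    ∑ n ∈ Finset.Icc q r, ((N ∩ Mblock n).card : ℝ) * ((2:ℝ) ^ (n - 1))⁻¹ ≤ 1 := by
  classical
  obtain ⟨hne, hcard⟩ := hN
  set m := N.min' hne with hm
  have hm_mem : m ∈ N := N.min'_mem hne
  have h1m : 1 ≤ m := le_trans (Finset.card_pos.2 hne) (hcard m hm_mem)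
  set L := Nat.log 2 m with hL
  set n1 := L + 1 with hn1
  have h2L : 2 ^ L ≤ m := Nat.pow_log_le_self 2 (by omega)
  have hm2 : m < 2 ^ n1 := Nat.lt_pow_succ_log_self (by norm_num) m
  have hblock : ∀ n, (N ∩ Mblock n).Nonempty → n1 ≤ n := by
    intro n ⟨x, hx⟩
    rw [Finset.mem_inter, mem_Mblock] at hx
    have hmx : m ≤ x := Finset.min'_le N x hx.1
    have : (2:ℕ) ^ L < 2 ^ n := lt_of_le_of_lt (le_trans h2L hmx) hx.2.2
    have := (Nat.pow_lt_pow_iff_right (by norm_num : 1 < 2)).1 this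
    omega
  have hc1 : (N ∩ Mblock n1).card ≤ 2 ^ n1 - m := by
    have hsub : N ∩ Mblock n1 ⊆ Finset.Ico m (2 ^ n1) := by
      intro x hx
      rw [Finset.mem_inter, mem_Mblock] at hx
      exact Finset.mem_Ico.2 ⟨Finset.min'_le N x hx.1, hx.2.2⟩
    simpa [Nat.card_Ico] using Finset.card_le_card hsub
  have hsum : ∑ n ∈ Finset.Icc q r, (N ∩ Mblock n).card ≤ m :=
    le_trans (sum_card_inter_le q r N) (hcard m hm_mem)
  have hterm : ∀ n ∈ Finset.Icc q r,
      ((N ∩ Mblock n).card : ℝ) * ((2:ℝ) ^ (n - 1))⁻¹ ≤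
      (((N ∩ Mblock n).card : ℝ) + (if n = n1 then ((N ∩ Mblock n1).card : ℝ) else 0))
        * ((2:ℝ) ^ n1)⁻¹ := by
    intro n _
    rcases Nat.eq_zero_or_pos (N ∩ Mblock n).card with h0 | hpos
    · rw [h0]
      have : (0:ℝ) ≤ (if n = n1 then ((N ∩ Mblock n1).card : ℝ) else 0) := by positivity
      push_cast
      nlinarith [inv_nonneg.2 (le_of_lt (pow_pos (by norm_num : (0:ℝ) < 2) n1))]
    · have hnn1 : n1 ≤ n := hblock n (Finset.card_pos.1 hpos)
      rcases eq_or_lt_of_le hnn1 with heq | hlt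
      · subst heq
        rw [if_pos rfl]
        have he : (2:ℝ) ^ n1 = 2 * 2 ^ (n1 - 1) := by
          rw [hn1]; simp [pow_succ]; ring
        rw [he]
        have hpow : (0:ℝ) < 2 ^ (n1 - 1) := by positivity
        rw [mul_inv, ← mul_assoc]
        have : (((N ∩ Mblock n1).card : ℝ) + ((N ∩ Mblock n1).card : ℝ)) * (2:ℝ)⁻¹
            = ((N ∩ Mblock n1).card : ℝ) := by ring
        rw [this]
      · rw [if_neg (by omega), add_zero]
        apply mul_le_mul_of_nonneg_left _ (Nat.cast_nonneg _)
        apply inv_anti₀ (by positivity)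
        exact pow_le_pow_right₀ (by norm_num) (by omega)
  calc ∑ n ∈ Finset.Icc q r, ((N ∩ Mblock n).card : ℝ) * ((2:ℝ) ^ (n - 1))⁻¹
      ≤ ∑ n ∈ Finset.Icc q r,
        ((((N ∩ Mblock n).card : ℝ) + (if n = n1 then ((N ∩ Mblock n1).card : ℝ) else 0))
          * ((2:ℝ) ^ n1)⁻¹) := Finset.sum_le_sum hterm
    _ = ((∑ n ∈ Finset.Icc q r, ((N ∩ Mblock n).card : ℝ))
          + (if n1 ∈ Finset.Icc q r then ((N ∩ Mblock n1).card : ℝ) else 0)) * ((2:ℝ) ^ n1)⁻¹ := by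
        rw [← Finset.sum_mul, Finset.sum_add_distrib, Finset.sum_ite_eq' (Finset.Icc q r)]
    _ ≤ ((m : ℝ) + ((2 ^ n1 : ℕ) - (m:ℝ))) * ((2:ℝ) ^ n1)⁻¹ := by
        apply mul_le_mul_of_nonneg_right _ (by positivity)
        apply add_le_add
        · calc (∑ n ∈ Finset.Icc q r, ((N ∩ Mblock n).card : ℝ))
              = ((∑ n ∈ Finset.Icc q r, (N ∩ Mblock n).card : ℕ) : ℝ) := by push_cast; ring
            _ ≤ (m : ℝ) := Nat.cast_le.2 hsum
        · have hle : ((N ∩ Mblock n1).card : ℝ) ≤ ((2 ^ n1 : ℕ) : ℝ) - (m : ℝ) := by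
            have : ((N ∩ Mblock n1).card : ℝ) ≤ (((2 ^ n1 - m : ℕ)) : ℝ) := Nat.cast_le.2 hc1
            rw [Nat.cast_sub (le_of_lt hm2)] at this
            exact this
          split
          · exact hle
          · have h' : (m:ℝ) ≤ ((2 ^ n1 : ℕ) : ℝ) := Nat.cast_le.2 hm2.le
            push_cast at h' ⊢
            linarith
    _ = 1 := by
        push_cast
        field_simp
        ring

lemma sepChain_disjoint {k : ℕ} {N : Fin k → Finset ℕ} (hsep : SepChain N)
    {i j : Fin k} (hij : i ≠ j) : Disjoint (N i) (N j) := by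
  wlog hlt : i < j generalizing i j
  · exact (this hij.symm (by omega)).symm
  refine Finset.disjoint_left.2 fun x hx hx' => ?_
  exact lt_irrefl x (hsep i j hlt x hx x hx')

/-- Column sum bound: a block meets the members of a separated chain in at most
`2^(n-1)` points in total. -/
lemma col_sum {k : ℕ} {N : Fin k → Finset ℕ} (hsep : SepChain N) {n : ℕ} (hn : 1 ≤ n) :
    ∑ j : Fin k, (N j ∩ Mblock n).card ≤ 2 ^ (n - 1) := by
  classical
  have hdisj : ∀ i ∈ Finset.univ, ∀ j ∈ Finset.univ, i ≠ j →
      Disjoint (N i ∩ Mblock n) (N j ∩ Mblock n) := fun i _ j _ h =>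
    ((sepChain_disjoint hsep h).mono Finset.inter_subset_left Finset.inter_subset_left)
  rw [← Finset.card_biUnion hdisj]
  calc (Finset.univ.biUnion fun j => N j ∩ Mblock n).card
      ≤ (Mblock n).card :=
        Finset.card_le_card (Finset.biUnion_subset.2 fun j _ => Finset.inter_subset_right)
    _ = 2 ^ (n - 1) := card_Mblock hn

/-- Let `p ∈ (1,∞)` and, for `1 ≤ q ≤ r`, let
`y_{q,r} = ∑_{n=q}^r (1/n) x_n`, where `x_n = 2^{-(n-1)} ∑_{j∈M_n} b_j` is the normalized
indicator of `M_n = [2^{n-1}, 2^n) ∩ ℕ`.  Then `‖y_{q,r}‖_{B_p} = (∑_{n=q}^r n^{-p})^{1/p}`. -/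
theorem stmt_14 (p : ℝ) (hp : 1 < p) (q r : ℕ) (hq : 1 ≤ q) (hqr : q ≤ r) :
    BpNorm p (fun j => ∑ n ∈ Finset.Icc q r,
        (1 / (n : ℝ)) * (if j ∈ Mblock n then (1 / 2 ^ (n - 1) : ℝ) else 0)) =
      (∑ n ∈ Finset.Icc q r, ((n : ℝ) ^ p)⁻¹) ^ (1 / p) := by
  classical
  set y : ℕ → ℝ := fun j => ∑ n ∈ Finset.Icc q r,
      (1 / (n : ℝ)) * (if j ∈ Mblock n then (1 / 2 ^ (n - 1) : ℝ) else 0) with hy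
  set V : ℝ := (∑ n ∈ Finset.Icc q r, ((n : ℝ) ^ p)⁻¹) ^ (1 / p) with hV
  -- the target sum rewritten via `1/n`
  have hinv : ∀ n ∈ Finset.Icc q r, ((n:ℝ)^p)⁻¹ = (1/(n:ℝ))^p := by
    intro n hn
    rw [one_div, Real.inv_rpow (Nat.cast_nonneg n)]
  -- Upper bound
  have hub : ∀ t ∈ { t : ℝ | ∃ (k : ℕ) (N : Fin k → Finset ℕ), 0 < k ∧
      (∀ j, Admissible (N j)) ∧ SepChain N ∧ t = (∑ j, (mu y (N j)) ^ p) ^ (1 / p) },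
      t ≤ V := by
    rintro t ⟨k, N, hk, hadm, hsep, rfl⟩
    have hmu : ∀ j, mu y (N j) = ∑ n ∈ Finset.Icc q r,
        (((N j ∩ Mblock n).card : ℝ) * ((2:ℝ) ^ (n - 1))⁻¹) * (1 / (n : ℝ)) :=
      fun j => mu_formula q r (N j)
    have hstep1 : ∀ j, (mu y (N j)) ^ p ≤ ∑ n ∈ Finset.Icc q r,
        (((N j ∩ Mblock n).card : ℝ) * ((2:ℝ) ^ (n - 1))⁻¹) * (1 / (n : ℝ)) ^ p := by
      intro j
      rw [hmu j]
      exact jensen_rpow (Finset.Icc q r) _ _ hp.le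
        (fun n _ => by positivity) (fun n _ => by positivity)
        (row_sum q r (hadm j))
    have hstep2 : (∑ j, (mu y (N j)) ^ p) ≤ ∑ n ∈ Finset.Icc q r, ((n:ℝ)^p)⁻¹ := by
      calc (∑ j, (mu y (N j)) ^ p)
          ≤ ∑ j, ∑ n ∈ Finset.Icc q r,
            (((N j ∩ Mblock n).card : ℝ) * ((2:ℝ) ^ (n - 1))⁻¹) * (1 / (n : ℝ)) ^ p :=
            Finset.sum_le_sum fun j _ => hstep1 j
        _ = ∑ n ∈ Finset.Icc q r, (∑ j, ((N j ∩ Mblock n).card : ℝ))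
              * (((2:ℝ) ^ (n - 1))⁻¹ * (1 / (n : ℝ)) ^ p) := by
            rw [Finset.sum_comm]
            exact Finset.sum_congr rfl fun n _ => by
              rw [Finset.sum_mul]
              exact Finset.sum_congr rfl fun j _ => by ring
        _ ≤ ∑ n ∈ Finset.Icc q r, ((n:ℝ)^p)⁻¹ := by
            apply Finset.sum_le_sum
            intro n hn
            have hn1 : 1 ≤ n := le_trans hq (Finset.mem_Icc.1 hn).1
            have hcol : (∑ j, ((N j ∩ Mblock n).card : ℝ)) ≤ (2:ℝ) ^ (n-1) := by
              have := col_sum hsep hn1 (N := N)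
              calc (∑ j, ((N j ∩ Mblock n).card : ℝ))
                  = ((∑ j, (N j ∩ Mblock n).card : ℕ) : ℝ) := by push_cast; ring
                _ ≤ ((2 ^ (n-1) : ℕ) : ℝ) := Nat.cast_le.2 this
                _ = (2:ℝ) ^ (n-1) := by push_cast; ring
            rw [hinv n hn]
            calc (∑ j, ((N j ∩ Mblock n).card : ℝ))
                  * (((2:ℝ) ^ (n - 1))⁻¹ * (1 / (n : ℝ)) ^ p)
                ≤ (2:ℝ) ^ (n-1) * (((2:ℝ) ^ (n - 1))⁻¹ * (1 / (n : ℝ)) ^ p) := by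
                  apply mul_le_mul_of_nonneg_right hcol
                  have : (0:ℝ) ≤ (1 / (n : ℝ)) ^ p := Real.rpow_nonneg (by positivity) p
                  positivity
              _ = (1 / (n : ℝ)) ^ p := by
                  rw [← mul_assoc, mul_inv_cancel₀ (by positivity), one_mul]
    have hnn : (0:ℝ) ≤ ∑ j, (mu y (N j)) ^ p := Finset.sum_nonneg fun j _ =>
      Real.rpow_nonneg (Finset.sum_nonneg fun i _ => abs_nonneg _) p
    exact Real.rpow_le_rpow hnn hstep2 (by positivity)
  -- the maximizing chain
  have hmem : V ∈ { t : ℝ | ∃ (k : ℕ) (N : Fin k → Finset ℕ), 0 < k ∧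
      (∀ j, Admissible (N j)) ∧ SepChain N ∧ t = (∑ j, (mu y (N j)) ^ p) ^ (1 / p) } := by
    refine ⟨r + 1 - q, fun j => Mblock (q + j), by omega, ?_, ?_, ?_⟩
    · intro j
      have hj1 : 1 ≤ q + (j:ℕ) := by omega
      constructor
      · refine ⟨2 ^ (q + (j:ℕ) - 1), mem_Mblock.2 ⟨le_refl _, ?_⟩⟩
        exact Nat.pow_lt_pow_right (by norm_num) (by omega)
      · intro x hx
        rw [card_Mblock hj1]
        exact (mem_Mblock.1 hx).1
    · intro i j hij a ha b hb
      rw [mem_Mblock] at ha hb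
      have : (2:ℕ) ^ (q + (i:ℕ)) ≤ 2 ^ (q + (j:ℕ) - 1) :=
        Nat.pow_le_pow_right (by norm_num) (by omega)
      omega
    · -- value of the chain
      have hmuM : ∀ j : Fin (r + 1 - q), mu y (Mblock (q + j)) = 1 / ((q + (j:ℕ)) : ℝ) := by
        intro j
        rw [mu_formula]
        have hmem' : q + (j:ℕ) ∈ Finset.Icc q r := Finset.mem_Icc.2 ⟨by omega, by omega⟩
        rw [Finset.sum_eq_single_of_mem (q + (j:ℕ)) hmem']
        · rw [Finset.inter_self, card_Mblock (by omega)]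
          have h2 : (((2:ℕ) ^ (q + (j:ℕ) - 1) : ℕ) : ℝ) = (2:ℝ) ^ (q + (j:ℕ) - 1) := by
            push_cast; ring
          rw [h2, mul_inv_cancel₀ (by positivity), one_mul]
          push_cast; ring
        · intro n _ hne
          rw [Finset.disjoint_iff_inter_eq_empty.1 (Mblock_disjoint (fun h => hne h.symm))]
          simp
      have : (∑ j : Fin (r + 1 - q), (mu y (Mblock (q + j))) ^ p)
          = ∑ n ∈ Finset.Icc q r, ((n:ℝ)^p)⁻¹ := by
        rw [Fin.sum_univ_eq_sum_range (fun j => (mu y (Mblock (q + j))) ^ p)]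
        have hIcc : Finset.Icc q r = Finset.Ico q (r + 1) := by
          rw [Nat.Icc_eq_range', Nat.Ico_eq_range']
        rw [hIcc, Finset.sum_Ico_eq_sum_range]
        apply Finset.sum_congr rfl
        intro i hi
        rw [Finset.mem_range] at hi
        have hi' : (⟨i, by omega⟩ : Fin (r + 1 - q)) = i := rfl
        rw [hmuM ⟨i, by omega⟩, hinv (q + i) (Finset.mem_Icc.2 ⟨by omega, by omega⟩)]
        push_cast
        norm_num
      rw [hV, ← this]
  exact le_antisymm
    (csSup_le ⟨V, hmem⟩ hub)
    (le_csSup ⟨V, hub⟩ hmem)
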